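/- With the Whiteman generalized cyclotomic classes of order 6 modulo $n = n_1 n_2$ and $\beta$ a primitive $n$-th root of unity in a field $K$ with $\mathrm{char}(K) \nmid n$, define $S(X) = \sum_{i \in N_1 \cup D_0 \cup D_1 \cup D_2} X^i$. Then for every $a \in D_3$, $S(\beta^a) = -(S(\beta) + 1)$. -/

import Mathlib

open Finset Polynomial

/-- The Whiteman generalized cyclotomic class `D_i` of order 6 modulo `n = n1 * n2`,
given a common primitive root `g` and the CRT element `x`. -/
def whitemanD (n1 n2 g x : ℕ) (i : ℕ) : Finset ℕ :=
  (Finset.range ((n1 - 1) * (n2 - 1) / 6)).image (fun s => g ^ s * x ^ i % (n1 * n2))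

/-- The set `{k * a : 1 ≤ k ≤ b - 1}` of nonzero multiples of `a` below `a * b`. -/
def multSet (a b : ℕ) : Finset ℕ :=
  (Finset.Icc 1 (b - 1)).image (fun k => k * a)

/-- The index set of the generator polynomial `S(x)`: `N1 ∪ D0 ∪ D1 ∪ D2`. -/
def whitemanSIdx (n1 n2 g x : ℕ) : Finset ℕ :=
  multSet n1 n2 ∪ whitemanD n1 n2 g x 0 ∪ whitemanD n1 n2 g x 1 ∪ whitemanD n1 n2 g x 2

private lemma sum_range_shift_one {M : Type*} [AddCommGroup M] (f : ℕ → M) (e : ℕ)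
    (hf : f e = f 0) :
    ∑ s ∈ Finset.range e, f (s + 1) = ∑ s ∈ Finset.range e, f s := by
  have h1 := Finset.sum_range_succ' f e
  have h2 := Finset.sum_range_succ f e
  rw [h1, hf] at h2
  exact add_right_cancel h2

private lemma sum_range_shift {M : Type*} [AddCommGroup M] (f : ℕ → M) (e : ℕ)
    (hf : ∀ s, f (s + e) = f s) (r : ℕ) :
    ∑ s ∈ Finset.range e, f (r + s) = ∑ s ∈ Finset.range e, f s := by
  induction r with
  | zero => simp
  | succ r ih =>
      have h0 : (fun s => f (r + s)) e = (fun s => f (r + s)) 0 := by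
        show f (r + e) = f (r + 0)
        rw [Nat.add_zero]
        exact hf r
      calc ∑ s ∈ Finset.range e, f (r + 1 + s)
          = ∑ s ∈ Finset.range e, f (r + s + 1) := by
            apply Finset.sum_congr rfl; intro s _; congr 1; omega
        _ = ∑ s ∈ Finset.range e, f (r + s) :=
            sum_range_shift_one (fun s => f (r + s)) e h0
        _ = _ := ih

private lemma unit_pow_modEq {M : Type*} [Monoid M] {u : M} (hu : IsUnit u) {s t : ℕ}
    (h : u ^ s = u ^ t) : s ≡ t [MOD orderOf u] := by
  lift u to Mˣ using hu
  rw [← Units.val_pow_eq_pow_val, ← Units.val_pow_eq_pow_val] at h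
  rw [orderOf_units]
  exact pow_eq_pow_iff_modEq.mp (Units.ext h)

theorem S_at_beta_pow_D3
    (n1 n2 : ℕ) (hp1 : n1.Prime) (hp2 : n2.Prime) (hne : n1 ≠ n2)
    (ho1 : Odd n1) (ho2 : Odd n2)
    (hgcd : Nat.gcd (n1 - 1) (n2 - 1) = 6)
    (g x : ℕ)
    (hg1 : orderOf (g : ZMod n1) = n1 - 1)
    (hg2 : orderOf (g : ZMod n2) = n2 - 1)
    (hx1 : x % n1 = g % n1) (hx2 : x % n2 = 1 % n2)
    (K : Type*) [Field K] (hchar : ¬ (ringChar K ∣ n1 * n2))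
    (β : K) (hβ : IsPrimitiveRoot β (n1 * n2)) :
    ∀ a ∈ whitemanD n1 n2 g x 3,
      ∑ i ∈ whitemanSIdx n1 n2 g x, (β ^ a) ^ i
        = -((∑ i ∈ whitemanSIdx n1 n2 g x, β ^ i) + 1) := by
  classical
  intro a ha
  have h6_1 : 6 ∣ n1 - 1 := hgcd ▸ Nat.gcd_dvd_left _ _
  have h6_2 : 6 ∣ n2 - 1 := hgcd ▸ Nat.gcd_dvd_right _ _
  have hn1_7 : 7 ≤ n1 := by
    have h2 := hp1.two_le; obtain ⟨c, hc⟩ := h6_1; omega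
  have hn2_7 : 7 ≤ n2 := by
    have h2 := hp2.two_le; obtain ⟨c, hc⟩ := h6_2; omega
  obtain ⟨n, hn⟩ : ∃ m, n1 * n2 = m := ⟨_, rfl⟩
  obtain ⟨e, he⟩ : ∃ m, (n1 - 1) * (n2 - 1) / 6 = m := ⟨_, rfl⟩
  rw [hn] at hβ
  have he6 : 6 * e = (n1 - 1) * (n2 - 1) := by
    rw [← he]
    exact Nat.mul_div_cancel' (Dvd.dvd.mul_left h6_2 (n1 - 1))
  have he_pos : 0 < e := by
    have h := Nat.mul_pos (show 0 < n1 - 1 by omega) (show 0 < n2 - 1 by omega)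
    omega
  have hlcm : Nat.lcm (n1 - 1) (n2 - 1) = e := by
    have h := Nat.gcd_mul_lcm (n1 - 1) (n2 - 1)
    rw [hgcd] at h
    omega
  have h1n : 1 < n := by
    have h := Nat.mul_le_mul hn1_7 hn2_7
    omega
  have hn_pos : 0 < n := by omega
  have hcopn : Nat.Coprime n1 n2 := (Nat.coprime_primes hp1 hp2).mpr hne
  haveI : NeZero n1 := ⟨by omega⟩
  haveI : NeZero n2 := ⟨by omega⟩
  -- casts of x
  have hx1' : (x : ZMod n1) = (g : ZMod n1) := by
    rw [ZMod.natCast_eq_natCast_iff']; exact hx1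
  have hx2' : (x : ZMod n2) = 1 := by
    have h := (ZMod.natCast_eq_natCast_iff' x 1 n2).mpr hx2
    simpa using h
  -- units
  have hgu1 : IsUnit (g : ZMod n1) := by
    have h0 : orderOf (g : ZMod n1) ≠ 0 := by rw [hg1]; omega
    by_contra hcon
    exact h0 (orderOf_eq_zero fun hfin => hcon hfin.isUnit)
  have hgu2 : IsUnit (g : ZMod n2) := by
    have h0 : orderOf (g : ZMod n2) ≠ 0 := by rw [hg2]; omega
    by_contra hcon
    exact h0 (orderOf_eq_zero fun hfin => hcon hfin.isUnit)
  have hcg1 : Nat.Coprime g n1 := (ZMod.isUnit_iff_coprime g n1).mp hgu1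
  have hcg2 : Nat.Coprime g n2 := (ZMod.isUnit_iff_coprime g n2).mp hgu2
  have hcx1 : Nat.Coprime x n1 := (ZMod.isUnit_iff_coprime x n1).mp (hx1' ▸ hgu1)
  have hcx2 : Nat.Coprime x n2 := (ZMod.isUnit_iff_coprime x n2).mp (hx2' ▸ isUnit_one)
  have hcgsxi : ∀ s i : ℕ, Nat.Coprime (g ^ s * x ^ i) n := fun s i => by
    rw [← hn]
    exact Nat.Coprime.mul
      (Nat.Coprime.mul_right (hcg1.pow_left s) (hcg2.pow_left s))
      (Nat.Coprime.mul_right (hcx1.pow_left i) (hcx2.pow_left i))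
  have hn1dvd : n1 ∣ n := by rw [← hn]; exact dvd_mul_right n1 n2
  have hn2dvd : n2 ∣ n := by rw [← hn]; exact dvd_mul_left n2 n1
  -- the key injectivity lemma
  have hkey : ∀ s t i j : ℕ, s < e → t < e → i < 6 → j < 6 →
      (g ^ s * x ^ i) % n = (g ^ t * x ^ j) % n → s = t ∧ i = j := by
    intro s t i j hs ht hi hj hmod
    have hmn : g ^ s * x ^ i ≡ g ^ t * x ^ j [MOD n] := hmod
    have hm1 : g ^ s * x ^ i ≡ g ^ t * x ^ j [MOD n1] := hmn.of_dvd hn1dvd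
    have hm2 : g ^ s * x ^ i ≡ g ^ t * x ^ j [MOD n2] := hmn.of_dvd hn2dvd
    have hz1 : (g : ZMod n1) ^ (s + i) = (g : ZMod n1) ^ (t + j) := by
      have h := (ZMod.natCast_eq_natCast_iff _ _ _).mpr hm1
      push_cast at h
      rw [hx1'] at h
      rw [pow_add, pow_add]
      exact h
    have hz2 : (g : ZMod n2) ^ s = (g : ZMod n2) ^ t := by
      have h := (ZMod.natCast_eq_natCast_iff _ _ _).mpr hm2
      push_cast at h
      rw [hx2'] at h
      simpa using h
    have hmod1 : s + i ≡ t + j [MOD n1 - 1] := by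
      have h := unit_pow_modEq hgu1 hz1; rwa [hg1] at h
    have hmod2 : s ≡ t [MOD n2 - 1] := by
      have h := unit_pow_modEq hgu2 hz2; rwa [hg2] at h
    have h6a : s + i ≡ t + j [MOD 6] := hmod1.of_dvd h6_1
    have h6b : s ≡ t [MOD 6] := hmod2.of_dvd h6_2
    have hij : i = j := by
      have h6c : i ≡ j [MOD 6] := Nat.ModEq.add_left_cancel h6b h6a
      have h' : i % 6 = j % 6 := h6c
      rw [Nat.mod_eq_of_lt hi, Nat.mod_eq_of_lt hj] at h'
      exact h'
    subst hij
    have hmod1' : s ≡ t [MOD n1 - 1] := Nat.ModEq.add_right_cancel' i hmod1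
    have hst : s ≡ t [MOD e] := by
      rw [← hlcm, Nat.modEq_iff_dvd]
      have d1 := Nat.modEq_iff_dvd.mp hmod1'
      have d2 := Nat.modEq_iff_dvd.mp hmod2
      have h := Int.coe_lcm_dvd d1 d2
      simpa [Int.lcm, Int.natAbs_natCast] using h
    exact ⟨hst.eq_of_lt_of_lt hs ht, rfl⟩
  -- β facts
  have hβpow : ∀ m : ℕ, β ^ (m % n) = β ^ m := by
    intro m
    conv_rhs => rw [← Nat.div_add_mod m n]
    rw [pow_add, pow_mul, hβ.pow_eq_one, one_pow, one_mul]
  have hβmod : ∀ m m' : ℕ, m ≡ m' [MOD n] → β ^ m = β ^ m' := by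
    intro m m' h
    rw [← hβpow m, ← hβpow m']
    exact congrArg (fun k => β ^ k) h
  -- g^e ≡ 1 mod n
  have hge1 : g ^ e ≡ 1 [MOD n] := by
    rw [← hn]
    apply (Nat.modEq_and_modEq_iff_modEq_mul hcopn).mp
    constructor
    · rw [← ZMod.natCast_eq_natCast_iff]
      push_cast
      exact orderOf_dvd_iff_pow_eq_one.mp (by rw [hg1, ← hlcm]; exact Nat.dvd_lcm_left _ _)
    · rw [← ZMod.natCast_eq_natCast_iff]
      push_cast
      exact orderOf_dvd_iff_pow_eq_one.mp (by rw [hg2, ← hlcm]; exact Nat.dvd_lcm_right _ _)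
  -- filters of range n
  have hA1 : (Finset.range n).filter (fun i => n1 ∣ i) = (Finset.range n2).image (· * n1) := by
    ext i
    simp only [mem_filter, mem_range, mem_image]
    constructor
    · rintro ⟨hin, k, rfl⟩
      rw [← hn] at hin
      exact ⟨k, Nat.lt_of_mul_lt_mul_left hin, mul_comm k n1⟩
    · rintro ⟨k, hk, rfl⟩
      refine ⟨?_, dvd_mul_left n1 k⟩
      rw [← hn, mul_comm k n1]
      exact mul_lt_mul_of_pos_left hk (show (0:ℕ) < n1 by omega)
  have hA2 : (Finset.range n).filter (fun i => n2 ∣ i) = (Finset.range n1).image (· * n2) := by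
    ext i
    simp only [mem_filter, mem_range, mem_image]
    constructor
    · rintro ⟨hin, k, rfl⟩
      rw [← hn, mul_comm n1 n2] at hin
      exact ⟨k, Nat.lt_of_mul_lt_mul_left hin, mul_comm k n2⟩
    · rintro ⟨k, hk, rfl⟩
      refine ⟨?_, dvd_mul_left n2 k⟩
      rw [← hn, mul_comm n1 n2, mul_comm k n2]
      exact mul_lt_mul_of_pos_left hk (show (0:ℕ) < n2 by omega)
  have hprim1 : IsPrimitiveRoot (β ^ n1) n2 := hβ.pow hn_pos hn.symm
  have hprim2 : IsPrimitiveRoot (β ^ n2) n1 := hβ.pow hn_pos (by rw [← hn, mul_comm])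
  have hA1sum : ∑ i ∈ (Finset.range n).filter (fun i => n1 ∣ i), β ^ i = 0 := by
    rw [hA1, Finset.sum_image (fun p _ q _ h =>
      Nat.eq_of_mul_eq_mul_right (show 0 < n1 by omega) h)]
    have hterm : ∀ k, β ^ (k * n1) = (β ^ n1) ^ k := fun k => by rw [mul_comm, pow_mul]
    simp_rw [hterm]
    exact hprim1.geom_sum_eq_zero (by omega)
  have hA2sum : ∑ i ∈ (Finset.range n).filter (fun i => n2 ∣ i), β ^ i = 0 := by
    rw [hA2, Finset.sum_image (fun p _ q _ h =>
      Nat.eq_of_mul_eq_mul_right (show 0 < n2 by omega) h)]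
    have hterm : ∀ k, β ^ (k * n2) = (β ^ n2) ^ k := fun k => by rw [mul_comm, pow_mul]
    simp_rw [hterm]
    exact hprim2.geom_sum_eq_zero (by omega)
  have hTot : ∑ i ∈ Finset.range n, β ^ i = 0 := hβ.geom_sum_eq_zero h1n
  -- sum over units is 1
  have hBB : ((Finset.range n).filter (fun i => ¬ n1 ∣ i)).filter (fun i => n2 ∣ i)
      = (Finset.range n).filter (fun i => n2 ∣ i) \ {0} := by
    ext i
    simp only [Finset.filter_filter, mem_filter, mem_sdiff, mem_range, mem_singleton]
    constructor
    · rintro ⟨hir, h1, h2⟩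
      exact ⟨⟨hir, h2⟩, fun h0 => h1 (h0 ▸ dvd_zero n1)⟩
    · rintro ⟨⟨hir, h2⟩, h0⟩
      refine ⟨hir, fun h1 => h0 ?_, h2⟩
      refine Nat.eq_zero_of_dvd_of_lt ?_ hir
      rw [← hn]
      exact hcopn.mul_dvd_of_dvd_of_dvd h1 h2
  have hzero_mem : (0 : ℕ) ∈ (Finset.range n).filter (fun i => n2 ∣ i) := by
    simp only [mem_filter, mem_range]
    exact ⟨hn_pos, dvd_zero n2⟩
  have hB2sum : ∑ i ∈ (Finset.range n).filter (fun i => n2 ∣ i) \ {0}, β ^ i = -1 := by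
    rw [Finset.sum_sdiff_eq_sub (Finset.singleton_subset_iff.mpr hzero_mem), hA2sum]
    simp
  have hUsum : ∑ i ∈ (Finset.range n).filter (fun i => ¬ n1 ∣ i ∧ ¬ n2 ∣ i), β ^ i = 1 := by
    have step1 := Finset.sum_filter_add_sum_filter_not (Finset.range n)
      (fun i => n1 ∣ i) (fun i => β ^ i)
    have step2 := Finset.sum_filter_add_sum_filter_not
      ((Finset.range n).filter (fun i => ¬ n1 ∣ i)) (fun i => n2 ∣ i) (fun i => β ^ i)
    rw [hBB, hB2sum] at step2
    rw [hA1sum, hTot, zero_add] at step1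
    rw [Finset.filter_filter, step1] at step2
    linear_combination step2
  -- cardinalities
  have hA1card : ((Finset.range n).filter (fun i => n1 ∣ i)).card = n2 := by
    rw [hA1, Finset.card_image_of_injective _ (mul_left_injective₀ (show n1 ≠ 0 by omega)),
      Finset.card_range]
  have hA2card : ((Finset.range n).filter (fun i => n2 ∣ i)).card = n1 := by
    rw [hA2, Finset.card_image_of_injective _ (mul_left_injective₀ (show n2 ≠ 0 by omega)),
      Finset.card_range]
  have hInter : (Finset.range n).filter (fun i => n1 ∣ i) ∩
      (Finset.range n).filter (fun i => n2 ∣ i) = {0} := by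
    ext i
    simp only [mem_inter, mem_filter, mem_range, mem_singleton]
    constructor
    · rintro ⟨⟨hir, h1⟩, ⟨-, h2⟩⟩
      refine Nat.eq_zero_of_dvd_of_lt ?_ hir
      rw [← hn]
      exact hcopn.mul_dvd_of_dvd_of_dvd h1 h2
    · rintro rfl
      exact ⟨⟨hn_pos, dvd_zero n1⟩, ⟨hn_pos, dvd_zero n2⟩⟩
  have hUeq : (Finset.range n).filter (fun i => ¬ n1 ∣ i ∧ ¬ n2 ∣ i)
      = Finset.range n \ ((Finset.range n).filter (fun i => n1 ∣ i) ∪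
          (Finset.range n).filter (fun i => n2 ∣ i)) := by
    ext i
    simp only [mem_filter, mem_sdiff, mem_union, mem_range]
    tauto
  have hUcard : ((Finset.range n).filter (fun i => ¬ n1 ∣ i ∧ ¬ n2 ∣ i)).card
      = (n1 - 1) * (n2 - 1) := by
    rw [hUeq, Finset.card_sdiff_of_subset (Finset.union_subset (Finset.filter_subset _ _)
      (Finset.filter_subset _ _)), Finset.card_range]
    have hcu := Finset.card_union_add_card_inter
      ((Finset.range n).filter (fun i => n1 ∣ i)) ((Finset.range n).filter (fun i => n2 ∣ i))
    rw [hInter, hA1card, hA2card, Finset.card_singleton] at hcu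
    obtain ⟨p, hp⟩ : ∃ p, n1 = p + 1 := ⟨n1 - 1, by omega⟩
    obtain ⟨q, hq⟩ : ∃ q, n2 = q + 1 := ⟨n2 - 1, by omega⟩
    subst hp; subst hq
    have hexp : (p + 1) * (q + 1) = p * q + p + q + 1 := by ring
    have hn' : n = (p + 1) * (q + 1) := hn.symm
    simp only [Nat.add_sub_cancel]
    omega
  -- D_j basic facts
  have hDmem : ∀ j d, d ∈ whitemanD n1 n2 g x j ↔ ∃ s < e, g ^ s * x ^ j % n = d := by
    intro j d
    rw [← he, ← hn]
    simp only [whitemanD, mem_image, mem_range]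
  have hDcop : ∀ j : ℕ, ∀ d ∈ whitemanD n1 n2 g x j, Nat.Coprime d n := by
    intro j d hd
    obtain ⟨s, hs, rfl⟩ := (hDmem j d).mp hd
    have h := hcgsxi s j
    unfold Nat.Coprime at h ⊢
    rw [← Nat.gcd_rec]
    rwa [Nat.gcd_comm] at h
  have hDsub : ∀ j : ℕ, whitemanD n1 n2 g x j ⊆
      (Finset.range n).filter (fun i => ¬ n1 ∣ i ∧ ¬ n2 ∣ i) := by
    intro j d hd
    obtain ⟨s, hs, hds⟩ := (hDmem j d).mp hd
    have hcd := hDcop j d hd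
    simp only [mem_filter, mem_range]
    refine ⟨?_, fun h1 => ?_, fun h2 => ?_⟩
    · rw [← hds]; exact Nat.mod_lt _ hn_pos
    · have hdg : n1 ∣ Nat.gcd d n := Nat.dvd_gcd h1 hn1dvd
      rw [hcd] at hdg
      have := Nat.le_of_dvd one_pos hdg
      omega
    · have hdg : n2 ∣ Nat.gcd d n := Nat.dvd_gcd h2 hn2dvd
      rw [hcd] at hdg
      have := Nat.le_of_dvd one_pos hdg
      omega
  have hDcard : ∀ j < 6, (whitemanD n1 n2 g x j).card = e := by
    intro j hj
    unfold whitemanD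
    rw [he, hn, Finset.card_image_of_injOn, Finset.card_range]
    intro s hs t ht hst
    exact (hkey s t j j (mem_range.mp hs) (mem_range.mp ht) hj hj hst).1
  have hDdisj : ∀ i < 6, ∀ j < 6, i ≠ j →
      Disjoint (whitemanD n1 n2 g x i) (whitemanD n1 n2 g x j) := by
    intro i hi j hj hij
    rw [Finset.disjoint_left]
    intro d hdi hdj
    obtain ⟨s, hs, hds⟩ := (hDmem i d).mp hdi
    obtain ⟨t, ht, hdt⟩ := (hDmem j d).mp hdj
    exact hij (hkey s t i j hs ht hi hj (hds.trans hdt.symm)).2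
  -- the D_j partition the units
  have hW : (Finset.range 6).biUnion (fun j => whitemanD n1 n2 g x j)
      = (Finset.range n).filter (fun i => ¬ n1 ∣ i ∧ ¬ n2 ∣ i) := by
    apply Finset.eq_of_subset_of_card_le
    · intro d hd
      rw [Finset.mem_biUnion] at hd
      obtain ⟨j, hj, hdj⟩ := hd
      exact hDsub j hdj
    · rw [Finset.card_biUnion (fun i hi j hj hij =>
        hDdisj i (mem_range.mp hi) j (mem_range.mp hj) hij)]
      rw [hUcard]
      rw [Finset.sum_congr rfl (fun j hj => hDcard j (mem_range.mp hj))]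
      rw [Finset.sum_const, Finset.card_range, smul_eq_mul]
      omega
  have hTsum : ∑ j ∈ Finset.range 6, (∑ i ∈ whitemanD n1 n2 g x j, β ^ i) = 1 := by
    rw [← Finset.sum_biUnion]
    · rw [hW]; exact hUsum
    · intro i hi j hj hij
      simp only [Finset.coe_range, Set.mem_Iio] at hi hj
      exact hDdisj i hi j hj hij
  -- generic sum over D_j
  have hDsum : ∀ j, j < 6 → ∑ i ∈ whitemanD n1 n2 g x j, β ^ i
      = ∑ s ∈ Finset.range e, β ^ (g ^ s * x ^ j) := by
    intro j hj
    unfold whitemanD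
    rw [he, hn, Finset.sum_image (fun s hs t ht hst =>
      (hkey s t j j (mem_range.mp hs) (mem_range.mp ht) hj hj hst).1)]
    exact Finset.sum_congr rfl (fun s _ => hβmod _ _ (Nat.mod_modEq _ n))
  -- data of a ∈ D3
  obtain ⟨r, hr, har⟩ := (hDmem 3 a).mp ha
  have hacopn : Nat.Coprime a n := hDcop 3 a ha
  have hacop2 : Nat.Coprime a n2 := Nat.Coprime.coprime_dvd_right hn2dvd hacopn
  -- multiplication by a maps D_j to D_{j+3}
  have hmap : ∀ j, j < 3 → ∑ i ∈ whitemanD n1 n2 g x j, β ^ (a * i)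
      = ∑ i ∈ whitemanD n1 n2 g x (j + 3), β ^ i := by
    intro j hj
    have hj6 : j < 6 := by omega
    have hj36 : j + 3 < 6 := by omega
    rw [hDsum (j + 3) hj36]
    unfold whitemanD
    rw [he, hn, Finset.sum_image (fun s hs t ht hst =>
      (hkey s t j j (mem_range.mp hs) (mem_range.mp ht) hj6 hj6 hst).1)]
    have hterm : ∀ s : ℕ, β ^ (a * (g ^ s * x ^ j % n)) = β ^ (g ^ (r + s) * x ^ (j + 3)) := by
      intro s
      apply hβmod
      calc a * (g ^ s * x ^ j % n)
          ≡ (g ^ r * x ^ 3) * (g ^ s * x ^ j) [MOD n] :=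
            Nat.ModEq.mul (har ▸ Nat.mod_modEq _ n) (Nat.mod_modEq _ n)
        _ = g ^ (r + s) * x ^ (j + 3) := by rw [pow_add, pow_add]; ring
    simp_rw [hterm]
    exact sum_range_shift (fun s => β ^ (g ^ s * x ^ (j + 3))) e
      (fun s => hβmod _ _ (by
        calc g ^ (s + e) * x ^ (j + 3) = (g ^ s * g ^ e) * x ^ (j + 3) := by rw [pow_add]
          _ ≡ (g ^ s * 1) * x ^ (j + 3) [MOD n] :=
              Nat.ModEq.mul_right _ (Nat.ModEq.mul_left _ hge1)
          _ = g ^ s * x ^ (j + 3) := by rw [mul_one])) r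
  -- sum over the multiplier set
  have hMsum : ∀ c : ℕ, Nat.Coprime c n2 → ∑ i ∈ multSet n1 n2, β ^ (c * i) = -1 := by
    intro c hc
    unfold multSet
    rw [Finset.sum_image (fun p _ q _ h =>
      Nat.eq_of_mul_eq_mul_right (show 0 < n1 by omega) h)]
    have hIcc : Finset.Icc 1 (n2 - 1) = Finset.Ico 1 n2 := by
      rw [← Finset.Ico_add_one_right_eq_Icc]
      congr 1
      omega
    rw [hIcc]
    have hbot := Finset.sum_eq_sum_Ico_succ_bot (show 0 < n2 by omega)
      (fun k => β ^ (c * (k * n1)))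
    rw [← Finset.range_eq_Ico] at hbot
    have hδ : IsPrimitiveRoot ((β ^ n1) ^ c) n2 := hprim1.pow_of_coprime c hc
    have h0 : ∑ k ∈ Finset.range n2, β ^ (c * (k * n1)) = 0 := by
      have hterm : ∀ k, β ^ (c * (k * n1)) = ((β ^ n1) ^ c) ^ k := by
        intro k
        rw [← pow_mul, ← pow_mul]
        congr 1
        ring
      simp_rw [hterm]
      exact hδ.geom_sum_eq_zero (by omega)
    rw [hbot] at h0
    simp only [Nat.zero_mul, Nat.mul_zero, pow_zero] at h0
    linear_combination h0
  -- disjointness facts to split the sum over whitemanSIdx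
  have hmult_dvd : ∀ m ∈ multSet n1 n2, n1 ∣ m := by
    intro m hm
    obtain ⟨k, hk, rfl⟩ := Finset.mem_image.mp hm
    exact dvd_mul_left n1 k
  have hdMD : ∀ j, j < 6 → Disjoint (multSet n1 n2) (whitemanD n1 n2 g x j) := by
    intro j hj
    rw [Finset.disjoint_left]
    intro m hm hmD
    have h1 := hDsub j hmD
    simp only [mem_filter] at h1
    exact h1.2.1 (hmult_dvd m hm)
  have hd0 : Disjoint (multSet n1 n2) (whitemanD n1 n2 g x 0) := hdMD 0 (by omega)
  have hd1 : Disjoint (multSet n1 n2 ∪ whitemanD n1 n2 g x 0) (whitemanD n1 n2 g x 1) :=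
    Finset.disjoint_union_left.mpr
      ⟨hdMD 1 (by omega), hDdisj 0 (by omega) 1 (by omega) (by omega)⟩
  have hd2 : Disjoint (multSet n1 n2 ∪ whitemanD n1 n2 g x 0 ∪ whitemanD n1 n2 g x 1)
      (whitemanD n1 n2 g x 2) :=
    Finset.disjoint_union_left.mpr
      ⟨Finset.disjoint_union_left.mpr
        ⟨hdMD 2 (by omega), hDdisj 0 (by omega) 2 (by omega) (by omega)⟩,
        hDdisj 1 (by omega) 2 (by omega) (by omega)⟩
  have hsplit : ∀ F : ℕ → K, ∑ i ∈ whitemanSIdx n1 n2 g x, F i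
      = ∑ i ∈ multSet n1 n2, F i + ∑ i ∈ whitemanD n1 n2 g x 0, F i
        + ∑ i ∈ whitemanD n1 n2 g x 1, F i + ∑ i ∈ whitemanD n1 n2 g x 2, F i := by
    intro F
    unfold whitemanSIdx
    rw [Finset.sum_union hd2, Finset.sum_union hd1, Finset.sum_union hd0]
  -- final computation
  have hLHS : (∑ i ∈ whitemanSIdx n1 n2 g x, (β ^ a) ^ i)
      = ∑ i ∈ whitemanSIdx n1 n2 g x, β ^ (a * i) :=
    Finset.sum_congr rfl (fun i _ => (pow_mul β a i).symm)
  have hM1 : ∑ i ∈ multSet n1 n2, β ^ i = -1 := by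
    have h := hMsum 1 (Nat.coprime_one_left n2)
    simpa using h
  rw [hLHS, hsplit (fun i => β ^ (a * i)), hsplit (fun i => β ^ i)]
  rw [hMsum a hacop2, hmap 0 (by omega), hmap 1 (by omega), hmap 2 (by omega), hM1]
  simp only [Finset.sum_range_succ, Finset.sum_range_zero, zero_add] at hTsum
  norm_num
  linear_combination hTsum
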